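/- Euler–MacLaurin formula for the index of ∂̄_A on P¹ (polynomials of degree ≤ 5): for every natural number A and every real polynomial f with deg f ≤ 5, one has ∑_{d=0}^{A} f(d) = ∫_ℝ m₀(ξ) f(ξ) dξ + (1/12)(f(0) + f(A) − f(−1) − f(A+1)) − (1/240)(f''(0) + f''(A) − f''(−1) − f''(A+1)) + (1/6048)(f''''(0) + f''''(A) − f''''(−1) − f''''(A+1)). -/

import Mathlib

open MeasureTheory Polynomial

/-- The trapezoid function `m₀`. -/
noncomputable def m₀ (A : ℕ) (ξ : ℝ) : ℝ :=
  if ξ ≤ -1 then 0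
  else if ξ ≤ 0 then ξ + 1
  else if ξ ≤ A then 1
  else if ξ ≤ A + 1 then A + 1 - ξ
  else 0

lemma polyint (P : Polynomial ℝ) (a b : ℝ) :
    ∫ x in a..b, (derivative P).eval x = P.eval b - P.eval a :=
  intervalIntegral.integral_eq_sub_of_hasDerivAt (fun x _ => P.hasDerivAt x)
    ((derivative P).continuous.intervalIntegrable a b)

lemma keyL (f : Polynomial ℝ) (hf : f.natDegree < 6) (a : ℝ) :
    f.eval (a + 1) = (∫ x in a..(a + 1), (x - a) * f.eval x)
      + (∫ x in (a + 1)..(a + 1 + 1), (a + 1 + 1 - x) * f.eval x)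
      + (1 / 12) * (2 * f.eval (a + 1) - f.eval a - f.eval (a + 1 + 1))
      - (1 / 240) * (2 * (derivative^[2] f).eval (a + 1) - (derivative^[2] f).eval a
          - (derivative^[2] f).eval (a + 1 + 1))
      + (1 / 6048) * (2 * (derivative^[4] f).eval (a + 1) - (derivative^[4] f).eval a
          - (derivative^[4] f).eval (a + 1 + 1)) := by
  set c0 := f.coeff 0; set c1 := f.coeff 1; set c2 := f.coeff 2
  set c3 := f.coeff 3; set c4 := f.coeff 4; set c5 := f.coeff 5
  have hev : ∀ x : ℝ, f.eval x
      = c0 + c1*x + c2*x^2 + c3*x^3 + c4*x^4 + c5*x^5 := by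
    intro x
    rw [Polynomial.eval_eq_sum_range' hf]
    simp [Finset.sum_range_succ]
    rfl
  have hd2 : derivative^[2] f = derivative (derivative f) := rfl
  have hd4 : derivative^[4] f = derivative (derivative (derivative (derivative f))) := rfl
  have hn1 := Polynomial.natDegree_derivative_le f
  have hn2 := Polynomial.natDegree_derivative_le (derivative f)
  have hn3 := Polynomial.natDegree_derivative_le (derivative (derivative f))
  have hn4 := Polynomial.natDegree_derivative_le (derivative (derivative (derivative f)))
  have h2 : ∀ x : ℝ, (derivative^[2] f).eval x
      = 2*c2 + 6*c3*x + 12*c4*x^2 + 20*c5*x^3 := by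
    intro x
    rw [hd2, Polynomial.eval_eq_sum_range' (n := 4) (by omega)]
    simp [Finset.sum_range_succ, Polynomial.coeff_derivative]
    ring
  have h4 : ∀ x : ℝ, (derivative^[4] f).eval x = 24*c4 + 120*c5*x := by
    intro x
    rw [hd4, Polynomial.eval_eq_sum_range' (n := 2) (by omega)]
    simp [Finset.sum_range_succ, Polynomial.coeff_derivative]
    ring
  set Q : Polynomial ℝ := C c0 * X + C (c1/2) * X^2 + C (c2/3) * X^3 + C (c3/4) * X^4
      + C (c4/5) * X^5 + C (c5/6) * X^6 with hQ
  set R : Polynomial ℝ := C (c0/2) * X^2 + C (c1/3) * X^3 + C (c2/4) * X^4 + C (c3/5) * X^5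
      + C (c4/6) * X^6 + C (c5/7) * X^7 with hR
  have hI1 : (∫ x in a..(a + 1), (x - a) * f.eval x)
      = (R - C a * Q).eval (a+1) - (R - C a * Q).eval a := by
    rw [← polyint (R - C a * Q) a (a+1)]
    apply intervalIntegral.integral_congr
    intro x _
    simp [hQ, hR, hev, derivative_add, derivative_sub, derivative_mul]
    ring
  have hI2 : (∫ x in (a + 1)..(a + 1 + 1), (a + 1 + 1 - x) * f.eval x)
      = (C (a+2) * Q - R).eval (a+1+1) - (C (a+2) * Q - R).eval (a+1) := by
    rw [← polyint (C (a+2) * Q - R) (a+1) (a+1+1)]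
    apply intervalIntegral.integral_congr
    intro x _
    simp [hQ, hR, hev, derivative_add, derivative_sub, derivative_mul]
    ring
  rw [hI1, hI2]
  simp only [hQ, hR, hev, h2, h4, eval_add, eval_sub, eval_mul, eval_pow, eval_C, eval_X]
  ring

lemma m₀_cont (A : ℕ) : Continuous (m₀ A) := by
  have hA : (0:ℝ) ≤ (A:ℝ) := Nat.cast_nonneg A
  have h : m₀ A = fun ξ => max 0 (min (min (ξ + 1) ((A:ℝ) + 1 - ξ)) 1) := by
    funext ξ
    simp only [m₀, max_def, min_def]
    split_ifs <;> linarith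
  rw [h]; fun_prop

lemma m₀_conv (A : ℕ) (f : Polynomial ℝ) :
    ∫ ξ : ℝ, m₀ A ξ * f.eval ξ
      = (∫ x in (-1:ℝ)..0, (x + 1) * f.eval x) + (∫ x in (0:ℝ)..(A:ℝ), f.eval x)
        + ∫ x in (A:ℝ)..((A:ℝ) + 1), ((A:ℝ) + 1 - x) * f.eval x := by
  have hA : (0:ℝ) ≤ (A:ℝ) := Nat.cast_nonneg A
  have hg : Continuous fun ξ : ℝ => m₀ A ξ * f.eval ξ := (m₀_cont A).mul f.continuous
  have hind : (fun ξ : ℝ => m₀ A ξ * f.eval ξ)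
      = (Set.Ioc (-1:ℝ) ((A:ℝ) + 1)).indicator (fun ξ => m₀ A ξ * f.eval ξ) := by
    funext ξ
    by_cases hmem : ξ ∈ Set.Ioc (-1:ℝ) ((A:ℝ) + 1)
    · rw [Set.indicator_of_mem hmem]
    · rw [Set.indicator_of_notMem hmem]
      have hm : m₀ A ξ = 0 := by
        simp only [Set.mem_Ioc, not_and_or, not_lt, not_le] at hmem
        simp only [m₀]
        rcases hmem with h | h <;> split_ifs <;> linarith
      rw [hm, zero_mul]
  rw [hind, MeasureTheory.integral_indicator measurableSet_Ioc,
    ← intervalIntegral.integral_of_le (by linarith : (-1:ℝ) ≤ (A:ℝ) + 1),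
    ← intervalIntegral.integral_add_adjacent_intervals (a := (-1:ℝ)) (b := 0) (c := (A:ℝ) + 1)
      (hg.intervalIntegrable _ _) (hg.intervalIntegrable _ _),
    ← intervalIntegral.integral_add_adjacent_intervals (a := (0:ℝ)) (b := (A:ℝ)) (c := (A:ℝ) + 1)
      (hg.intervalIntegrable _ _) (hg.intervalIntegrable _ _)]
  have e1 : (∫ x in (-1:ℝ)..0, m₀ A x * f.eval x) = ∫ x in (-1:ℝ)..0, (x + 1) * f.eval x := by
    apply intervalIntegral.integral_congr
    intro x hx
    rw [Set.uIcc_of_le (by norm_num)] at hx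
    obtain ⟨h1x, h2x⟩ := hx
    have hm : m₀ A x = x + 1 := by simp only [m₀]; split_ifs <;> linarith
    simp only [hm]
  have e2 : (∫ x in (0:ℝ)..(A:ℝ), m₀ A x * f.eval x) = ∫ x in (0:ℝ)..(A:ℝ), f.eval x := by
    apply intervalIntegral.integral_congr
    intro x hx
    rw [Set.uIcc_of_le hA] at hx
    obtain ⟨h1x, h2x⟩ := hx
    have hm : m₀ A x = 1 := by simp only [m₀]; split_ifs <;> linarith
    simp only [hm, one_mul]
  have e3 : (∫ x in (A:ℝ)..((A:ℝ) + 1), m₀ A x * f.eval x)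
      = ∫ x in (A:ℝ)..((A:ℝ) + 1), ((A:ℝ) + 1 - x) * f.eval x := by
    apply intervalIntegral.integral_congr
    intro x hx
    rw [Set.uIcc_of_le (by linarith)] at hx
    obtain ⟨h1x, h2x⟩ := hx
    have hm : m₀ A x = (A:ℝ) + 1 - x := by simp only [m₀]; split_ifs <;> linarith
    simp only [hm]
  rw [e1, e2, e3]; ring

/-- Euler–MacLaurin formula for the index of `∂̄_A` on `P¹`, for polynomials of
degree at most `5`. -/
theorem stmt5 (A : ℕ) (f : Polynomial ℝ) (hf : f.degree ≤ 5) :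
    ∑ d ∈ Finset.range (A + 1), f.eval (d : ℝ) =
      (∫ ξ : ℝ, m₀ A ξ * f.eval ξ)
      + (1 / 12) * (f.eval 0 + f.eval (A : ℝ) - f.eval (-1) - f.eval ((A : ℝ) + 1))
      - (1 / 240) * ((derivative^[2] f).eval 0 + (derivative^[2] f).eval (A : ℝ)
          - (derivative^[2] f).eval (-1) - (derivative^[2] f).eval ((A : ℝ) + 1))
      + (1 / 6048) * ((derivative^[4] f).eval 0 + (derivative^[4] f).eval (A : ℝ)
          - (derivative^[4] f).eval (-1) - (derivative^[4] f).eval ((A : ℝ) + 1)) := by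
  have hf' : f.natDegree < 6 := by
    have h5 : f.natDegree ≤ 5 := Polynomial.natDegree_le_iff_degree_le.mpr hf
    omega
  induction A with
  | zero =>
    have hL := keyL f hf' (-1)
    norm_num at hL
    rw [m₀_conv]
    norm_num [intervalIntegral.integral_same]
    linarith [hL]
  | succ A ih =>
    have hcont : Continuous fun x : ℝ => f.eval x := f.continuous
    have hL := keyL f hf' (A : ℝ)
    have hsplit : (∫ x in (0:ℝ)..((A:ℝ) + 1), f.eval x)
        = (∫ x in (0:ℝ)..(A:ℝ), f.eval x) + ∫ x in (A:ℝ)..((A:ℝ) + 1), f.eval x :=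
      (intervalIntegral.integral_add_adjacent_intervals
        (hcont.intervalIntegrable _ _) (hcont.intervalIntegrable _ _)).symm
    have hsub : (∫ x in (A:ℝ)..((A:ℝ) + 1), (x - (A:ℝ)) * f.eval x)
        = (∫ x in (A:ℝ)..((A:ℝ) + 1), f.eval x)
          - ∫ x in (A:ℝ)..((A:ℝ) + 1), ((A:ℝ) + 1 - x) * f.eval x := by
      have hc2 : Continuous fun x : ℝ => ((A:ℝ) + 1 - x) * f.eval x :=
        (continuous_const.sub continuous_id').mul hcont
      rw [← intervalIntegral.integral_sub (f := fun x : ℝ => f.eval x)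
        (g := fun x : ℝ => ((A:ℝ) + 1 - x) * f.eval x)
        (hcont.intervalIntegrable _ _) (hc2.intervalIntegrable _ _)]
      apply intervalIntegral.integral_congr
      intro x _
      ring
    rw [Finset.sum_range_succ, ih, m₀_conv A f, m₀_conv (A + 1) f]
    push_cast
    linarith [hL, hsplit, hsub]
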